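/- Fix a real L > 1. Let Σ′ = U Λ′ Uᵀ, where Λ′ is the d×d diagonal matrix with i-th entry λ′_i = (λ_i − σ²)²/λ_i for 1 ≤ i ≤ q and λ′_i = 0 for q < i ≤ d, and set B = I_d + W Wᵀ (L·Σ − W Wᵀ)⁻¹. Then tr(Bᵀ Σ⁻¹ B Σ′) − tr(Σ⁻¹ Σ′) = Σ_{i=1}^{q} [ (1 + (λ_i − σ²)/((L−1)·λ_i + σ²))² − 1 ] · λ′_i / λ_i. (This is twice the excess risk incurred by the optimal on-manifold perturbation of generative adversarial examples at the true parameters.) -/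

import Mathlib

open Matrix

/-- Twice the excess risk of the optimal generative (on-manifold) perturbation at the
true parameters: with `Σ′ = U Λ′ Uᵀ`, `λ′_i = (λ_i − σ²)²/λ_i` for `i ≤ q`, `0` otherwise,
and `B = I_d + W Wᵀ (L Σ − W Wᵀ)⁻¹`,
`tr(Bᵀ Σ⁻¹ B Σ′) − tr(Σ⁻¹ Σ′) = ∑_{i=1}^q [(1 + (λ_i − σ²)/((L−1)λ_i + σ²))² − 1] λ′_i/λ_i`. -/
theorem generative_excess_risk_trace
    (d q : ℕ) (hd : 1 ≤ d) (hq1 : 1 ≤ q) (hqd : q ≤ d)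
    (U : Matrix (Fin d) (Fin d) ℝ)
    (hU : U * Uᵀ = 1 ∧ Uᵀ * U = 1)
    (lam : Fin d → ℝ)
    (hlam_pos : ∀ i, 0 < lam i)
    (hlam_anti : ∀ i j : Fin d, i ≤ j → lam j ≤ lam i)
    (σ2 : ℝ) (hσ2_nonneg : 0 ≤ σ2)
    (hσ2_lt : σ2 < lam ⟨q - 1, by omega⟩)
    (Sig : Matrix (Fin d) (Fin d) ℝ)
    (hSig : Sig = U * diagonal lam * Uᵀ)
    (Uq : Matrix (Fin d) (Fin q) ℝ)
    (hUq : ∀ i j, Uq i j = U i (Fin.castLE hqd j))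
    (W : Matrix (Fin d) (Fin q) ℝ)
    (hW : W = Uq * diagonal (fun j : Fin q => Real.sqrt (lam (Fin.castLE hqd j) - σ2)))
    (L : ℝ) (hL : 1 < L)
    (lam' : Fin d → ℝ)
    (hlam' : ∀ i : Fin d, lam' i = if (i : ℕ) < q then (lam i - σ2) ^ 2 / lam i else 0)
    (Sig' : Matrix (Fin d) (Fin d) ℝ)
    (hSig' : Sig' = U * diagonal lam' * Uᵀ)
    (B : Matrix (Fin d) (Fin d) ℝ)
    (hB : B = 1 + W * Wᵀ * (L • Sig - W * Wᵀ)⁻¹) :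
    trace (Bᵀ * Sig⁻¹ * B * Sig') - trace (Sig⁻¹ * Sig') =
      ∑ j : Fin q,
        ((1 + (lam (Fin.castLE hqd j) - σ2) / ((L - 1) * lam (Fin.castLE hqd j) + σ2)) ^ 2 - 1) *
          lam' (Fin.castLE hqd j) / lam (Fin.castLE hqd j) := by
  obtain ⟨hU1, hU2⟩ := hU
  -- σ2 < lam i for i < q
  have hσlt : ∀ i : Fin d, (i : ℕ) < q → σ2 < lam i := by
    intro i hi
    refine lt_of_lt_of_le hσ2_lt (hlam_anti i ⟨q - 1, by omega⟩ ?_)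
    simp only [Fin.le_def]
    omega
  -- the diagonal of W Wᵀ
  set m : Fin d → ℝ := fun i => if (i : ℕ) < q then lam i - σ2 else 0 with hm
  -- basic conjugation machinery
  have conj_mul : ∀ a b : Fin d → ℝ,
      (U * diagonal a * Uᵀ) * (U * diagonal b * Uᵀ) = U * diagonal (a * b) * Uᵀ := by
    intro a b
    calc (U * diagonal a * Uᵀ) * (U * diagonal b * Uᵀ)
        = U * (diagonal a * (Uᵀ * U) * diagonal b) * Uᵀ := by
          simp only [Matrix.mul_assoc]
      _ = U * diagonal (a * b) * Uᵀ := by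
          rw [hU2, Matrix.mul_one, diagonal_mul_diagonal]
          rfl
  have conj_add : ∀ a b : Fin d → ℝ,
      (U * diagonal a * Uᵀ) + (U * diagonal b * Uᵀ) = U * diagonal (a + b) * Uᵀ := by
    intro a b
    rw [← Matrix.add_mul, ← Matrix.mul_add, diagonal_add]
    rfl
  have conj_sub : ∀ a b : Fin d → ℝ,
      (U * diagonal a * Uᵀ) - (U * diagonal b * Uᵀ) = U * diagonal (a - b) * Uᵀ := by
    intro a b
    rw [← Matrix.sub_mul, ← Matrix.mul_sub, diagonal_sub]
    rfl
  have diag1 : diagonal (1 : Fin d → ℝ) = 1 := diagonal_one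
  have conj_one : (1 : Matrix (Fin d) (Fin d) ℝ) = U * diagonal 1 * Uᵀ := by
    rw [diag1, Matrix.mul_one, hU1]
  have conj_inv : ∀ a : Fin d → ℝ, (∀ i, a i ≠ 0) →
      (U * diagonal a * Uᵀ)⁻¹ = U * diagonal a⁻¹ * Uᵀ := by
    intro a ha
    apply Matrix.inv_eq_right_inv
    rw [conj_mul]
    have : a * a⁻¹ = 1 := funext fun i => mul_inv_cancel₀ (ha i)
    rw [this, diag1, Matrix.mul_one, hU1]
  have conj_tr : ∀ a : Fin d → ℝ, trace (U * diagonal a * Uᵀ) = ∑ i, a i := by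
    intro a
    rw [Matrix.trace_mul_cycle, hU2, Matrix.one_mul, trace_diagonal]
  have conj_transpose : ∀ a : Fin d → ℝ,
      (U * diagonal a * Uᵀ)ᵀ = U * diagonal a * Uᵀ := by
    intro a
    rw [Matrix.transpose_mul, Matrix.transpose_mul, transpose_transpose,
      diagonal_transpose, Matrix.mul_assoc]
  -- reduction of sums from Fin d to Fin q
  have key_sum : ∀ g : Fin d → ℝ, (∀ i : Fin d, q ≤ (i : ℕ) → g i = 0) →
      ∑ i : Fin d, g i = ∑ j : Fin q, g (Fin.castLE hqd j) := by
    intro g hg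
    rw [← Finset.sum_filter_of_ne (p := fun i : Fin d => (i : ℕ) < q)
      (fun x _ hx => by by_contra h; exact hx (hg x (le_of_not_gt h)))]
    refine Finset.sum_bij' (fun i hi => (⟨(i : ℕ), (Finset.mem_filter.mp hi).2⟩ : Fin q))
      (fun j _ => Fin.castLE hqd j) ?_ ?_ ?_ ?_ ?_ <;> simp [Fin.ext_iff]
  -- W Wᵀ is the conjugated diagonal of m
  have hWWt : W * Wᵀ = U * diagonal m * Uᵀ := by
    have hsq : (diagonal (fun j : Fin q => Real.sqrt (lam (Fin.castLE hqd j) - σ2))) *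
        (diagonal (fun j : Fin q => Real.sqrt (lam (Fin.castLE hqd j) - σ2))) =
        diagonal (fun j : Fin q => lam (Fin.castLE hqd j) - σ2) := by
      rw [diagonal_mul_diagonal]
      exact congrArg diagonal (funext fun j => Real.mul_self_sqrt
        (le_of_lt (sub_pos.mpr (hσlt (Fin.castLE hqd j) (by exact j.isLt)))))
    rw [hW, Matrix.transpose_mul, diagonal_transpose, ← Matrix.mul_assoc,
      Matrix.mul_assoc Uq, hsq]
    ext i k
    simp only [Matrix.mul_apply, diagonal_apply, mul_ite, ite_mul, mul_zero, zero_mul,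
      Finset.sum_ite_eq, Finset.sum_ite_eq', Finset.mem_univ, if_true, transpose_apply, hUq]
    rw [key_sum (fun x => U i x * m x * U k x)
      (fun x hx => by simp [hm, Nat.not_lt.mpr hx])]
    refine Finset.sum_congr rfl fun x _ => ?_
    simp [hm, Fin.coe_castLE, x.isLt]
  -- the resolvent diagonal
  set r : Fin d → ℝ := fun i => L * lam i - m i with hr
  have hrpos : ∀ i, 0 < r i := by
    intro i
    by_cases hi : (i : ℕ) < q
    · have := hσlt i hi
      have := hlam_pos i
      simp only [hr, hm, if_pos hi]
      nlinarith
    · simp only [hr, hm, if_neg hi]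
      have := hlam_pos i
      nlinarith
  have hsm : U * diagonal (L • lam) * Uᵀ = L • (U * diagonal lam * Uᵀ) := by
    rw [diagonal_smul, mul_smul_comm, smul_mul_assoc]
  have hLS : L • Sig - W * Wᵀ = U * diagonal r * Uᵀ := by
    rw [hSig, hWWt, ← hsm, conj_sub]
    rfl
  -- B is a conjugated diagonal
  set b : Fin d → ℝ := fun i => 1 + m i * (r i)⁻¹ with hb
  have hBconj : B = U * diagonal b * Uᵀ := by
    rw [hB, hLS, conj_inv r (fun i => ne_of_gt (hrpos i)), hWWt, conj_mul, conj_one,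
      conj_add]
    rfl
  -- compute both traces
  have hSinv : Sig⁻¹ = U * diagonal lam⁻¹ * Uᵀ := by
    rw [hSig, conj_inv lam (fun i => ne_of_gt (hlam_pos i))]
  have htr1 : trace (Bᵀ * Sig⁻¹ * B * Sig') =
      ∑ i : Fin d, b i * (lam i)⁻¹ * b i * lam' i := by
    rw [hBconj, conj_transpose, hSinv, hSig', conj_mul, conj_mul, conj_mul, conj_tr]
    rfl
  have htr2 : trace (Sig⁻¹ * Sig') = ∑ i : Fin d, (lam i)⁻¹ * lam' i := by
    rw [hSinv, hSig', conj_mul, conj_tr]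
    rfl
  rw [htr1, htr2, ← Finset.sum_sub_distrib]
  rw [key_sum (fun i => b i * (lam i)⁻¹ * b i * lam' i - (lam i)⁻¹ * lam' i)
    (fun i hi => by simp [hlam' i, Nat.not_lt.mpr hi])]
  refine Finset.sum_congr rfl fun j _ => ?_
  set i : Fin d := Fin.castLE hqd j with hi
  have hiq : (i : ℕ) < q := j.isLt
  have hmi : m i = lam i - σ2 := by simp [hm, hiq]
  have hri : r i = L * lam i - (lam i - σ2) := by simp [hr, hmi]
  have hlpos := hlam_pos i
  have hden : (L - 1) * lam i + σ2 ≠ 0 := by nlinarith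
  have hrne : r i ≠ 0 := ne_of_gt (hrpos i)
  have hreq : r i = (L - 1) * lam i + σ2 := by rw [hri]; ring
  simp only [hb, hmi, hreq]
  rw [div_eq_mul_inv]
  field_simp
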